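/- Let S be a Noetherian ring, and suppose A is an operator on an S-module M = T^k·R_S^+ (for k a nonnegative integer) such that A := αφ − 1 is invertible on M with continuous inverse −Σ_{n≥0}(αφ)ⁿ. Then the S-linear map (R_S^+)^{αφ=1} → R_S^+ / T^k R_S^+ induced by reduction modulo T^k is injective, and since R_S^+/T^k R_S^+ is a free S-module of rank k, the module (R_S^+)^{αφ=1} is a finitely generated S-module. -/

import Mathlib

open Filter

variable (S : Type*) [NormedCommRing S]

/-- The convergence condition defining `R_S^+`: power series converging on the
open unit disc. -/
def RobbaPlusCond (a : ℕ → S) : Prop :=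
  ∀ r : ℝ, 0 ≤ r → r < 1 → Tendsto (fun i : ℕ => ‖a i‖ * r ^ i) atTop (nhds 0)

/-- `R_S^+` as a submodule of `ℕ → S`. -/
def robbaPlus : Submodule S (ℕ → S) where
  carrier := {a | RobbaPlusCond S a}
  zero_mem' := by
    intro r hr0 hr1
    simp
  add_mem' := by
    intro a b ha hb r hr0 hr1
    refine squeeze_zero (fun i => by positivity) (fun i => ?_)
      (by simpa using (ha r hr0 hr1).add (hb r hr0 hr1))
    calc ‖(a + b) i‖ * r ^ i ≤ (‖a i‖ + ‖b i‖) * r ^ i := by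
          exact mul_le_mul_of_nonneg_right (norm_add_le _ _) (by positivity)
      _ = ‖a i‖ * r ^ i + ‖b i‖ * r ^ i := by ring
  smul_mem' := by
    intro c a ha r hr0 hr1
    refine squeeze_zero (fun i => by positivity) (fun i => ?_)
      (by simpa using (ha r hr0 hr1).const_mul ‖c‖)
    calc ‖(c • a) i‖ * r ^ i ≤ (‖c‖ * ‖a i‖) * r ^ i := by
          exact mul_le_mul_of_nonneg_right (norm_mul_le _ _) (by positivity)
      _ = ‖c‖ * (‖a i‖ * r ^ i) := by ring

/-- The submodule `T^k R_S^+` of power series vanishing to order `k`. -/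
def robbaPlusTk (k : ℕ) : Submodule S ↥(robbaPlus S) where
  carrier := {a | ∀ i, i < k → a.1 i = 0}
  zero_mem' := fun i _ => rfl
  add_mem' := by
    intro a b ha hb i hi
    show a.1 i + b.1 i = 0
    rw [ha i hi, hb i hi, add_zero]
  smul_mem' := by
    intro c a ha i hi
    show c * a.1 i = 0
    rw [ha i hi, mul_zero]

/-- Finiteness of `(R_S^+)^{αφ=1}` (step in the proof of Prop. 3.9 of the paper):
if `A = αφ - 1` is invertible on `T^k R_S^+`, then reduction modulo `T^k` is
injective on `(R_S^+)^{αφ=1}`; since `R_S^+/T^k R_S^+` is free of rank `k` over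
the Noetherian ring `S`, the module `(R_S^+)^{αφ=1}` is finitely generated. -/
theorem stmt_11 [IsNoetherianRing S] (k : ℕ) (α : Sˣ)
    (φ : ↥(robbaPlus S) →ₗ[S] ↥(robbaPlus S))
    (A : ↥(robbaPlusTk S k) →ₗ[S] ↥(robbaPlusTk S k))
    (hA : ∀ x : ↥(robbaPlusTk S k), (A x : ↥(robbaPlus S)) = (α : S) • φ x.1 - x.1)
    (hAbij : Function.Bijective A) :
    Function.Injective
      (fun f : ↥(LinearMap.ker ((α : S) • φ - LinearMap.id)) =>
        Submodule.Quotient.mk (p := robbaPlusTk S k) f.1) ∧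
    Nonempty ((↥(robbaPlus S) ⧸ robbaPlusTk S k) ≃ₗ[S] (Fin k → S)) ∧
    Module.Finite S ↥(LinearMap.ker ((α : S) • φ - LinearMap.id)) := by
  classical
  -- the truncation map to the first k coefficients
  set q : ↥(robbaPlus S) →ₗ[S] (Fin k → S) :=
    { toFun := fun x => fun i => x.1 i
      map_add' := by intro x y; rfl
      map_smul' := by intro c x; rfl } with hq
  have hker : LinearMap.ker q = robbaPlusTk S k := by
    ext x
    constructor
    · intro hx i hik
      have := congrFun (hx : q x = 0) ⟨i, hik⟩
      exact this
    · intro hx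
      funext i
      exact hx i.1 i.2
  have hsurj : Function.Surjective q := by
    intro v
    set a : ℕ → S := fun i => if h : i < k then v ⟨i, h⟩ else 0 with ha
    have hmem : a ∈ robbaPlus S := by
      intro r hr0 hr1
      have hev : (fun i : ℕ => (0 : ℝ)) =ᶠ[atTop] fun i => ‖a i‖ * r ^ i := by
        refine eventually_atTop.2 ⟨k, fun i hi => ?_⟩
        simp [ha, not_lt.2 hi]
      exact tendsto_const_nhds.congr' hev
    exact ⟨⟨a, hmem⟩, by funext i; simp [hq, ha, i.2]⟩
  have e : (↥(robbaPlus S) ⧸ robbaPlusTk S k) ≃ₗ[S] (Fin k → S) := by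
    rw [← hker]
    exact LinearMap.quotKerEquivOfSurjective q hsurj
  -- injectivity
  have hinj : Function.Injective
      (fun f : ↥(LinearMap.ker ((α : S) • φ - LinearMap.id)) =>
        Submodule.Quotient.mk (p := robbaPlusTk S k) f.1) := by
    intro f g hfg
    have hmem : f.1 - g.1 ∈ robbaPlusTk S k := by
      simpa [Submodule.Quotient.eq] using hfg
    set x : ↥(robbaPlusTk S k) := ⟨f.1 - g.1, hmem⟩ with hx
    have hAx : A x = 0 := by
      apply Subtype.ext
      rw [hA x]
      have hf := f.2
      have hg := g.2
      rw [LinearMap.mem_ker] at hf hg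
      rw [LinearMap.sub_apply, LinearMap.smul_apply, LinearMap.id_apply] at hf hg
      have hf' : (α : S) • φ f.1 = f.1 := sub_eq_zero.mp hf
      have hg' : (α : S) • φ g.1 = g.1 := sub_eq_zero.mp hg
      have hval : (x : ↥(robbaPlus S)) = f.1 - g.1 := rfl
      rw [hval, map_sub, smul_sub, hf', hg', sub_self]
      rfl
    have : x = 0 := hAbij.1 (by rw [hAx, map_zero])
    have : f.1 - g.1 = 0 := by simpa [hx] using congrArg Subtype.val this
    exact Subtype.ext (sub_eq_zero.mp this)
  refine ⟨hinj, ⟨e⟩, ?_⟩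
  -- finiteness
  haveI : IsNoetherian S (Fin k → S) := inferInstance
  haveI : IsNoetherian S (↥(robbaPlus S) ⧸ robbaPlusTk S k) :=
    isNoetherian_of_linearEquiv e.symm
  exact Module.Finite.of_injective
    ((robbaPlusTk S k).mkQ.comp (LinearMap.ker ((α : S) • φ - LinearMap.id)).subtype)
    (fun a b h => hinj (by simpa using h))
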